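/- Projection lemma for the regularised learning functional: Let H_K be the RKHS of an operator-valued positive semidefinite kernel, x₁,…,x_{l+u} ∈ X, I(f) = (1/l) Σ_{j=1}^{l} V_{x_j}(y_j, C_{x_j} f(x_j)) + γ_A ‖f‖²_{H_K} + γ_I ⟨f̄, M f̄⟩, where f̄ = (f(x₁),…,f(x_{l+u})), M is a positive semidefinite operator, γ_A > 0, γ_I ≥ 0, and P is the orthogonal projection of H_K onto the closure of H_{K,x} = span{ K_{x_i} w : w ∈ W_{x_i}, 1 ≤ i ≤ l+u }. Then I(P f) ≤ I(f) for every f ∈ H_K. -/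

import Mathlib

open scoped RealInnerProductSpace

variable {l u : ℕ}

/-- The regularised learning functional
`I(f) = (1/l) Σ_j V_j(y_j, C_j f(x_j)) + γ_A ‖f‖² + γ_I ⟨f̄, M f̄⟩`, where the
evaluation at the input point `x_i` is `f(x_i) = K_{x_i}* f` and
`f̄ = (f(x_1),…,f(x_{l+u}))`. -/
noncomputable def lossI {HK : Type} [NormedAddCommGroup HK] [InnerProductSpace ℝ HK]
    [CompleteSpace HK]
    (Wb : Fin (l + u) → Type) [∀ i, NormedAddCommGroup (Wb i)]
    [∀ i, InnerProductSpace ℝ (Wb i)] [∀ i, CompleteSpace (Wb i)]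
    (Yb : Fin l → Type) [∀ j, NormedAddCommGroup (Yb j)] [∀ j, InnerProductSpace ℝ (Yb j)]
    (Kx : ∀ i, Wb i →L[ℝ] HK)
    (C : ∀ j : Fin l, Wb (Fin.castAdd u j) →L[ℝ] Yb j)
    (y : ∀ j : Fin l, Yb j)
    (V : ∀ j : Fin l, Yb j → Yb j → ℝ)
    (M : PiLp 2 Wb →L[ℝ] PiLp 2 Wb)
    (γA γI : ℝ) (f : HK) : ℝ :=
  (1 / (l : ℝ)) * ∑ j : Fin l, V j (y j) (C j ((Kx (Fin.castAdd u j)).adjoint f))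
    + γA * ‖f‖ ^ 2
    + γI * ⟪(WithLp.equiv 2 (∀ i, Wb i)).symm (fun i => (Kx i).adjoint f),
        M ((WithLp.equiv 2 (∀ i, Wb i)).symm (fun i => (Kx i).adjoint f))⟫

/-- Projection lemma: composing with the orthogonal projection onto the closure of the
span of the kernel sections does not increase the regularised learning functional. -/
theorem lossI_orthogonalProjection_le {HK : Type} [NormedAddCommGroup HK]
    [InnerProductSpace ℝ HK] [CompleteSpace HK]
    (Wb : Fin (l + u) → Type) [∀ i, NormedAddCommGroup (Wb i)]
    [∀ i, InnerProductSpace ℝ (Wb i)] [∀ i, CompleteSpace (Wb i)]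
    (Yb : Fin l → Type) [∀ j, NormedAddCommGroup (Yb j)] [∀ j, InnerProductSpace ℝ (Yb j)]
    (Kx : ∀ i, Wb i →L[ℝ] HK)
    (C : ∀ j : Fin l, Wb (Fin.castAdd u j) →L[ℝ] Yb j)
    (y : ∀ j : Fin l, Yb j)
    (V : ∀ j : Fin l, Yb j → Yb j → ℝ)
    (M : PiLp 2 Wb →L[ℝ] PiLp 2 Wb)
    (hM : ∀ v w : PiLp 2 Wb, ⟪M v, w⟫ = ⟪v, M w⟫) (hMpos : ∀ w : PiLp 2 Wb, 0 ≤ ⟪w, M w⟫)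
    (γA γI : ℝ) (hγA : 0 < γA) (hγI : 0 ≤ γI) (f : HK) :
    lossI Wb Yb Kx C y V M γA γI
        (((Submodule.span ℝ (⋃ i, Set.range (Kx i))).topologicalClosure.subtypeL)
          (Submodule.orthogonalProjection
            (Submodule.span ℝ (⋃ i, Set.range (Kx i))).topologicalClosure f)) ≤
      lossI Wb Yb Kx C y V M γA γI f := by
  set S := (Submodule.span ℝ (⋃ i, Set.range (Kx i))).topologicalClosure with hS
  set Pf : HK := (S.subtypeL (Submodule.orthogonalProjection S f)) with hPf
  have hmem : ∀ i (w : Wb i), Kx i w ∈ S := by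
    intro i w
    apply Submodule.le_topologicalClosure
    exact Submodule.subset_span (Set.mem_iUnion.2 ⟨i, ⟨w, rfl⟩⟩)
  have hadj : ∀ i, (Kx i).adjoint Pf = (Kx i).adjoint f := by
    intro i
    apply ext_inner_left ℝ
    intro w
    rw [ContinuousLinearMap.adjoint_inner_right, ContinuousLinearMap.adjoint_inner_right]
    have horth : f - Pf ∈ Sᗮ := Submodule.sub_starProjection_mem_orthogonal (K := S) f
    have := horth (Kx i w) (hmem i w)
    rw [inner_sub_right] at this
    linarith [this]
  have hnorm : ‖Pf‖ ≤ ‖f‖ := by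
    calc ‖Pf‖ = ‖Submodule.orthogonalProjection S f‖ := rfl
      _ ≤ ‖Submodule.orthogonalProjection S‖ * ‖f‖ := (Submodule.orthogonalProjection S).le_opNorm f
      _ ≤ 1 * ‖f‖ := by
          exact mul_le_mul_of_nonneg_right (Submodule.orthogonalProjectionOnto_norm_le S) (norm_nonneg f)
      _ = ‖f‖ := one_mul _
  unfold lossI
  simp only [hadj]
  have : γA * ‖Pf‖ ^ 2 ≤ γA * ‖f‖ ^ 2 := by
    apply mul_le_mul_of_nonneg_left _ hγA.le
    exact pow_le_pow_left₀ (norm_nonneg _) hnorm 2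
  linarith
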